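/- Let n ≥ 3 be an integer and p > 3 a prime with p ≡ 1 (mod n), and set m = (p−1)/n. Then ∑_{k=0}^{p−1} C(m+k, m)^n · ∑_{j=1}^k 1/j² ≡ −∑_{k=0}^{p−1} C(m+k, m)^n · ∑_{j=1}^{k+m} 1/j² (mod p), as a congruence between p-integral rationals. -/

import Mathlib

open Finset
variable {p : ℕ} [hpf : Fact p.Prime]

lemma sum_inv_sq_zmod (hp : 3 < p) : ∑ x : ZMod p, (x⁻¹)^2 = 0 := by
  have h1 : (∑ x : ZMod p, (x⁻¹)^2) = ∑ x : ZMod p, x^2 :=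
    Fintype.sum_bijective (fun x : ZMod p => x⁻¹) inv_involutive.bijective _ _ (fun x => rfl)
  rw [h1]
  have hc : Fintype.card (ZMod p) = p := ZMod.card p
  exact FiniteField.sum_pow_lt_card_sub_one (K := ZMod p) 2 (by omega)

lemma Icc1_eq_Ioc0 (x : ℕ) : Finset.Icc 1 x = Finset.Ioc 0 x := by
  ext a; simp [Finset.mem_Icc, Finset.mem_Ioc]; omega

def PC (p : ℕ) [Fact p.Prime] (x y : ℚ_[p]) : Prop := ‖x - y‖ ≤ (p:ℝ)^(-1:ℤ)

lemma pinv_pos : (0:ℝ) < (p:ℝ)^(-1:ℤ) := by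
  have := hpf.out.pos; positivity

lemma pinv_le_one : (p:ℝ)^(-1:ℤ) ≤ 1 := by
  have h1 : (1:ℝ) ≤ (p:ℝ) := by exact_mod_cast (Fact.out : p.Prime).one_lt.le
  rw [zpow_neg, zpow_one]
  exact inv_le_one_of_one_le₀ h1

lemma PC.symm {x y : ℚ_[p]} (h : PC p x y) : PC p y x := by
  unfold PC at *; rwa [← norm_neg, neg_sub]

lemma PC.add {x y x' y' : ℚ_[p]} (h : PC p x y) (h' : PC p x' y') :
    PC p (x + x') (y + y') := by
  unfold PC at *
  have : x + x' - (y + y') = (x - y) + (x' - y') := by ring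
  rw [this]
  exact (Padic.nonarchimedean _ _).trans (max_le h h')

lemma PC.neg {x y : ℚ_[p]} (h : PC p x y) : PC p (-x) (-y) := by
  unfold PC at *
  have : -x - -y = -(x - y) := by ring
  rwa [this, norm_neg]

lemma PC.mul {x y x' y' : ℚ_[p]} (h : PC p x y) (h' : PC p x' y')
    (hx : ‖x‖ ≤ 1) (hy' : ‖y'‖ ≤ 1) : PC p (x * x') (y * y') := by
  unfold PC at *
  have e : x * x' - y * y' = x * (x' - y') + (x - y) * y' := by ring
  rw [e]
  refine (Padic.nonarchimedean _ _).trans (max_le ?_ ?_)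
  · rw [norm_mul]
    calc ‖x‖ * ‖x' - y'‖ ≤ 1 * ((p:ℝ)^(-1:ℤ)) := by
          exact mul_le_mul hx h' (norm_nonneg _) zero_le_one
      _ = _ := one_mul _
  · rw [norm_mul]
    calc ‖x - y‖ * ‖y'‖ ≤ ((p:ℝ)^(-1:ℤ)) * 1 := by
          exact mul_le_mul h hy' (norm_nonneg _) (le_of_lt pinv_pos)
      _ = _ := mul_one _

lemma PC.sum {s : Finset ℕ} {f g : ℕ → ℚ_[p]} (h : ∀ i ∈ s, PC p (f i) (g i)) :
    PC p (∑ i ∈ s, f i) (∑ i ∈ s, g i) := by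
  unfold PC at *
  rw [← Finset.sum_sub_distrib]
  exact IsUltrametricDist.norm_sum_le_of_forall_le_of_nonneg (le_of_lt pinv_pos) h

lemma PC_int (a b : ℤ) (h : (a : ZMod p) = b) : PC p (a:ℚ_[p]) (b:ℚ_[p]) := by
  have hd : (p:ℤ) ∣ a - b := by
    rwa [← ZMod.intCast_zmod_eq_zero_iff_dvd, Int.cast_sub, sub_eq_zero]
  have := (Padic.norm_int_le_pow_iff_dvd (p := p) (a - b) 1).mpr (by simpa using hd)
  unfold PC
  rw [show ((a:ℚ_[p]) - b) = ((a - b : ℤ) : ℚ_[p]) by push_cast; ring]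
  simpa using this

lemma PC_nat (a b : ℕ) (h : (a : ZMod p) = b) : PC p (a:ℚ_[p]) (b:ℚ_[p]) := by
  have := PC_int (p := p) a b (by exact_mod_cast h)
  simpa using this

lemma norm_nat_le_one (a : ℕ) : ‖(a:ℚ_[p])‖ ≤ 1 := by
  simpa using Padic.norm_int_le_one (p := p) a

lemma norm_nat_unit {j : ℕ} (h : ¬ p ∣ j) : ‖(j:ℚ_[p])‖ = 1 := by
  have h1 := norm_nat_le_one (p := p) j
  have h2 : ¬ ‖((j:ℤ):ℚ_[p])‖ < 1 := by
    rw [Padic.norm_intCast_lt_one_iff]; exact_mod_cast h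
  push_cast at h2
  linarith [lt_or_ge ‖(j:ℚ_[p])‖ 1]

-- termwise: 1/j^2 ≡ w j ^ 2
lemma inv_sq_cong {j : ℕ} (h : ¬ p ∣ j) :
    PC p (1/(j:ℚ_[p])^2) (((((j:ZMod p)⁻¹).val)^2 : ℕ) : ℚ_[p]) := by
  set w := ((j:ZMod p)⁻¹).val with hw
  have hj0 : ((j:ℚ_[p])) ≠ 0 := by
    intro h0
    apply h
    have : ‖(j:ℚ_[p])‖ = 1 := norm_nat_unit h
    rw [h0] at this; simp at this
  have hzj : (j : ZMod p) ≠ 0 := by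
    rwa [Ne, ZMod.natCast_eq_zero_iff]
  have hkey : ((j^2 * w^2 : ℕ) : ZMod p) = ((1:ℕ) : ZMod p) := by
    push_cast
    rw [ZMod.natCast_val, ZMod.cast_id]
    rw [← mul_pow, mul_inv_cancel₀ hzj, one_pow]
  have hcong := PC_nat (p := p) _ _ hkey
  unfold PC at *
  have e : 1/(j:ℚ_[p])^2 - (w^2 : ℕ) = (1/(j:ℚ_[p])^2) * ((1:ℕ) - ((j^2 * w^2 : ℕ):ℚ_[p])) := by
    push_cast
    field_simp
  rw [e, norm_mul]
  have h1 : ‖1/(j:ℚ_[p])^2‖ = 1 := by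
    rw [one_div, norm_inv, pow_two, norm_mul, norm_nat_unit h]; norm_num
  rw [h1, one_mul, ← norm_neg]
  have : -((1:ℕ) - ((j^2 * w^2 : ℕ):ℚ_[p])) = ((j^2*w^2:ℕ):ℚ_[p]) - (1:ℕ) := by ring
  rw [this]
  exact hcong

lemma PC.trans {x y z : ℚ_[p]} (h1 : PC p x y) (h2 : PC p y z) : PC p x z := by
  unfold PC at *
  calc ‖x - z‖ = ‖(x - y) + (y - z)‖ := by ring_nf
    _ ≤ _ := (Padic.nonarchimedean _ _).trans (max_le h1 h2)
variable {p : ℕ} [hpf : Fact p.Prime]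

lemma cast_sum_w :
    ((∑ j ∈ range p, (((j:ZMod p)⁻¹).val)^2 : ℕ) : ZMod p) = ∑ x : ZMod p, (x⁻¹)^2 := by
  push_cast
  refine Finset.sum_nbij' (fun j => (j : ZMod p)) (fun x => x.val) ?_ ?_ ?_ ?_ ?_
  · intro a _; exact mem_univ _
  · intro x _
    have := ZMod.val_lt (n := p) x
    simpa using this
  · intro a ha
    exact ZMod.val_cast_of_lt (mem_range.mp ha)
  · intro x _
    simp [ZMod.natCast_val, ZMod.cast_id]
  · intro a _
    rw [ZMod.natCast_val, ZMod.cast_id]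

lemma hp1 (hp : 3 < p) : PC p (∑ j ∈ Icc 1 (p-1), 1/(j:ℚ_[p])^2) 0 := by
  have hins : range p = insert 0 (Icc 1 (p-1)) := by
    ext x; simp [Finset.mem_range, Finset.mem_Icc]; omega
  -- step 1: congruent to cast of nat sum
  have step1 : PC p (∑ j ∈ Icc 1 (p-1), 1/(j:ℚ_[p])^2)
      (∑ j ∈ Icc 1 (p-1), (((((j:ZMod p)⁻¹).val)^2 : ℕ) : ℚ_[p])) := by
    refine PC.sum (fun j hj => ?_)
    have hj' := Finset.mem_Icc.mp hj
    exact inv_sq_cong (Nat.not_dvd_of_pos_of_lt (by omega) (by omega))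
  have hzero : ((∑ j ∈ Icc 1 (p-1), (((j:ZMod p)⁻¹).val)^2 : ℕ) : ZMod p) = ((0:ℕ) : ZMod p) := by
    have : (∑ j ∈ range p, (((j:ZMod p)⁻¹).val)^2 : ℕ)
        = ∑ j ∈ Icc 1 (p-1), (((j:ZMod p)⁻¹).val)^2 := by
      rw [hins, Finset.sum_insert (by simp)]
      simp
    rw [← this, cast_sum_w, sum_inv_sq_zmod hp, Nat.cast_zero]
  have step2 : PC p ((∑ j ∈ Icc 1 (p-1), (((j:ZMod p)⁻¹).val)^2 : ℕ) : ℚ_[p]) 0 := by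
    have := PC_nat (p := p) _ _ hzero
    simpa using this
  have : (∑ j ∈ Icc 1 (p-1), (((((j:ZMod p)⁻¹).val)^2 : ℕ) : ℚ_[p]))
      = ((∑ j ∈ Icc 1 (p-1), (((j:ZMod p)⁻¹).val)^2 : ℕ) : ℚ_[p]) := by push_cast; ring
  rw [this] at step1
  exact step1.trans step2

lemma PC_inv_nat {a b : ℕ} (ha : ¬ p ∣ a) (hb : ¬ p ∣ b) (h : (a : ZMod p) = b) :
    PC p (1/(a:ℚ_[p])) (1/(b:ℚ_[p])) := by
  have ha' : ‖(a:ℚ_[p])‖ = 1 := norm_nat_unit ha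
  have hb' : ‖(b:ℚ_[p])‖ = 1 := norm_nat_unit hb
  have ha0 : (a:ℚ_[p]) ≠ 0 := by intro h0; rw [h0] at ha'; simp at ha'
  have hb0 : (b:ℚ_[p]) ≠ 0 := by intro h0; rw [h0] at hb'; simp at hb'
  have e : 1/(a:ℚ_[p]) - 1/(b:ℚ_[p]) = ((b:ℚ_[p]) - a) * (1/((a:ℚ_[p])*(b:ℚ_[p]))) := by
    field_simp
  unfold PC
  rw [e, norm_mul]
  have h1 : ‖1/((a:ℚ_[p])*(b:ℚ_[p]))‖ = 1 := by
    rw [one_div, norm_inv, norm_mul, ha', hb']; norm_num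
  rw [h1, mul_one]
  exact PC_nat (p := p) b a h.symm

noncomputable def Hs (p : ℕ) [Fact p.Prime] (t : ℕ) : ℚ_[p] := ∑ j ∈ Icc 1 t, 1/(j:ℚ_[p])^2

lemma norm_Hs_le_one {t : ℕ} (ht : t ≤ p - 1) : ‖Hs p t‖ ≤ 1 := by
  refine IsUltrametricDist.norm_sum_le_of_forall_le_of_nonneg zero_le_one (fun j hj => ?_)
  have hj' := Finset.mem_Icc.mp hj
  have hpp := hpf.out.two_le
  have : ‖(j:ℚ_[p])‖ = 1 := norm_nat_unit (Nat.not_dvd_of_pos_of_lt (by omega) (by omega))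
  rw [one_div, norm_inv, pow_two, norm_mul, this]
  norm_num

set_option maxHeartbeats 2000000 in
lemma h_reflect (hp : 3 < p) {t : ℕ} (ht : t ≤ p - 1) :
    PC p (Hs p (p-1-t)) (-(Hs p t)) := by
  have hsplit : Hs p (p-1-t) + (∑ j ∈ Ioc (p-1-t) (p-1), 1/(j:ℚ_[p])^2) = Hs p (p-1) := by
    unfold Hs
    rw [Icc1_eq_Ioc0, Icc1_eq_Ioc0]
    exact Finset.sum_Ioc_consecutive _ (by omega) (by omega)
  have hre : (∑ j ∈ Ioc (p-1-t) (p-1), 1/(j:ℚ_[p])^2)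
      = ∑ i ∈ Ioc 0 t, 1/(((p-i : ℕ)):ℚ_[p])^2 := by
    refine Finset.sum_nbij' (fun j => p - j) (fun i => p - i) ?_ ?_ ?_ ?_ ?_
    · intro a ha; simp only [Finset.mem_Ioc] at ha ⊢; omega
    · intro a ha; simp only [Finset.mem_Ioc] at ha ⊢; omega
    · intro a ha; simp only [Finset.mem_Ioc] at ha; show p - (p - a) = a; omega
    · intro a ha; simp only [Finset.mem_Ioc] at ha; show p - (p - a) = a; omega
    · intro a ha
      simp only [Finset.mem_Ioc] at ha
      show 1/(a:ℚ_[p])^2 = 1/(((p - (p - a)):ℕ):ℚ_[p])^2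
      rw [show p - (p - a) = a by omega]
  have hterm : ∀ i ∈ Ioc 0 t, PC p (1/(((p-i:ℕ)):ℚ_[p])^2) (1/(i:ℚ_[p])^2) := by
    intro i hi
    have hi' := Finset.mem_Ioc.mp hi
    have h1 : ¬ p ∣ (p-i)^2 := by
      intro hd
      have := hpf.out.dvd_of_dvd_pow hd
      have := Nat.le_of_dvd (by omega) this
      omega
    have h2 : ¬ p ∣ i^2 := by
      intro hd
      have := hpf.out.dvd_of_dvd_pow hd
      have := Nat.le_of_dvd (by omega) this
      omega
    have hz : (((p-i)^2 : ℕ) : ZMod p) = ((i^2 : ℕ) : ZMod p) := by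
      push_cast [Nat.cast_sub (by omega : i ≤ p)]
      ring_nf
      simp [ZMod.natCast_self]
    have := PC_inv_nat (p := p) h1 h2 hz
    push_cast at this
    exact this
  have hR : PC p (∑ j ∈ Ioc (p-1-t) (p-1), 1/(j:ℚ_[p])^2) (Hs p t) := by
    rw [hre]
    unfold Hs
    rw [Icc1_eq_Ioc0]
    exact PC.sum hterm
  have h0 : PC p (Hs p (p-1)) 0 := hp1 hp
  have : PC p (Hs p (p-1) - (∑ j ∈ Ioc (p-1-t) (p-1), 1/(j:ℚ_[p])^2)) (0 - Hs p t) := by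
    rw [sub_eq_add_neg, sub_eq_add_neg]
    exact PC.add h0 (PC.neg hR)
  have e : Hs p (p-1) - (∑ j ∈ Ioc (p-1-t) (p-1), 1/(j:ℚ_[p])^2) = Hs p (p-1-t) := by
    rw [← hsplit]; ring
  rwa [e, zero_sub] at this

lemma desc_prod (m k : ℕ) : ∏ i ∈ range m, (k+1+i) = (m+k).descFactorial m := by
  rw [Nat.descFactorial_eq_prod_range, ← Finset.prod_range_reflect]
  refine Finset.prod_congr rfl fun i hi => ?_
  have := Finset.mem_range.mp hi
  omega

lemma choose_reflect (hp : 3 < p) {k m : ℕ} (hkm : m + k ≤ p - 1) :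
    ((Nat.choose (p-1-k) m : ℕ) : ZMod p) = (-1)^m * ((Nat.choose (m+k) m : ℕ) : ZMod p) := by
  have hmfac : ((Nat.factorial m : ℕ) : ZMod p) ≠ 0 := by
    rw [Ne, ZMod.natCast_eq_zero_iff]
    intro hd
    have := (Nat.Prime.dvd_factorial hpf.out).mp hd
    omega
  have hdesc1 : ((Nat.descFactorial (p-1-k) m : ℕ) : ZMod p)
      = (-1)^m * ((Nat.descFactorial (m+k) m : ℕ) : ZMod p) := by
    rw [Nat.descFactorial_eq_prod_range, ← desc_prod]
    push_cast
    have step : ∀ i ∈ range m, (((p-1-k-i : ℕ)) : ZMod p) = -(((k+1+i : ℕ)) : ZMod p) := by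
      intro i hi
      have him := Finset.mem_range.mp hi
      rw [show p-1-k-i = p - (k+1+i) by omega, Nat.cast_sub (by omega : k+1+i ≤ p)]
      simp [ZMod.natCast_self]
    calc (∏ i ∈ range m, (((p-1-k-i : ℕ)) : ZMod p))
        = ∏ i ∈ range m, ((-1) * (((k+1+i : ℕ)) : ZMod p)) := by
          refine Finset.prod_congr rfl fun i hi => ?_
          rw [step i hi]; ring
      _ = (-1)^m * ∏ i ∈ range m, (((k+1+i : ℕ)) : ZMod p) := by
          rw [Finset.prod_mul_distrib, Finset.prod_const, Finset.card_range]
      _ = _ := by push_cast; ring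
  have key : ((Nat.factorial m : ℕ) : ZMod p) * ((Nat.choose (p-1-k) m : ℕ) : ZMod p)
      = ((Nat.factorial m : ℕ) : ZMod p) * ((-1)^m * ((Nat.choose (m+k) m : ℕ) : ZMod p)) := by
    have e1 := Nat.descFactorial_eq_factorial_mul_choose (p-1-k) m
    have e2 := Nat.descFactorial_eq_factorial_mul_choose (m+k) m
    have c1 : ((Nat.descFactorial (p-1-k) m : ℕ) : ZMod p)
        = ((Nat.factorial m : ℕ) : ZMod p) * ((Nat.choose (p-1-k) m : ℕ) : ZMod p) := by
      rw [e1]; push_cast; ring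
    have c2 : ((Nat.descFactorial (m+k) m : ℕ) : ZMod p)
        = ((Nat.factorial m : ℕ) : ZMod p) * ((Nat.choose (m+k) m : ℕ) : ZMod p) := by
      rw [e2]; push_cast; ring
    rw [← c1, hdesc1, c2]; ring
  exact mul_left_cancel₀ hmfac key

lemma choose_pow_cong (hp : 3 < p) {n k m : ℕ} (hkm : m + k ≤ p - 1) (hmn : p - 1 = m * n) :
    PC p ((Nat.choose (p-1-k) m : ℚ_[p])^n) ((Nat.choose (m+k) m : ℚ_[p])^n) := by
  have hz : ((Nat.choose (p-1-k) m ^ n : ℕ) : ZMod p) = ((Nat.choose (m+k) m ^ n : ℕ) : ZMod p) := by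
    push_cast
    rw [show ((Nat.choose (p-1-k) m : ZMod p)) = (-1)^m * (Nat.choose (m+k) m : ZMod p) by
      have := choose_reflect hp hkm; push_cast at this ⊢; exact this]
    rw [mul_pow, ← pow_mul, ← hmn]
    have hev : Even (p - 1) := by
      have hodd : Odd p := hpf.out.odd_of_ne_two (by omega)
      exact Nat.Odd.sub_odd hodd odd_one
    rw [hev.neg_one_pow, one_mul]
  have := PC_nat (p := p) _ _ hz
  push_cast at this
  exact this

lemma norm_Hs_le_sq {t : ℕ} (ht : t ≤ 2*p - 2) : ‖Hs p t‖ ≤ (p:ℝ)^(2:ℤ) := by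
  have hp2 := hpf.out.two_le
  have hppos : (0:ℝ) < (p:ℝ) := by positivity
  refine IsUltrametricDist.norm_sum_le_of_forall_le_of_nonneg (by positivity) (fun j hj => ?_)
  have hj' := Finset.mem_Icc.mp hj
  by_cases hdvd : p ∣ j
  · have hjp : j = p := by
      rcases hdvd with ⟨c, rfl⟩
      have hc2 : p * c ≤ 2 * p - 2 := le_trans hj'.2 ht
      have h1c := hj'.1
      have hcne : c ≠ 0 := by rintro rfl; omega
      have hclt : c < 2 := by
        by_contra hc
        push_neg at hc
        have : p * 2 ≤ p * c := Nat.mul_le_mul_left p hc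
        omega
      have : c = 1 := by omega
      subst this
      simp
    rw [show ((j:ℚ_[p])) = ((p:ℕ):ℚ_[p]) by rw [hjp]]
    rw [one_div, norm_inv, pow_two, norm_mul]
    rw [show ‖((p:ℕ):ℚ_[p])‖ = (p:ℝ)⁻¹ by simpa using Padic.norm_p (p := p)]
    rw [show ((p:ℝ)⁻¹ * (p:ℝ)⁻¹)⁻¹ = (p:ℝ)^(2:ℤ) by
      rw [zpow_two]; field_simp]
  · have h1 : ‖(j:ℚ_[p])‖ = 1 := norm_nat_unit hdvd
    rw [one_div, norm_inv, pow_two, norm_mul, h1]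
    have hc : (2:ℝ) ≤ (p:ℝ) := by exact_mod_cast hp2
    have : (1:ℝ) ≤ (p:ℝ)^(2:ℤ) := by
      rw [zpow_two]
      nlinarith
    simpa using this

lemma norm_choose_pow_le {n k m : ℕ} (hn : 3 ≤ n) (hmp : m < p) (hkp : k < p) (hpk : p ≤ m + k) :
    ‖((Nat.choose (m+k) m : ℚ_[p]))^n‖ ≤ ((p:ℝ)^(-1:ℤ))^n := by
  have hdvd : p ∣ Nat.choose (m+k) m := Nat.Prime.dvd_choose_add hpf.out hmp hkp hpk
  have h1 : ‖((Nat.choose (m+k) m : ℤ) : ℚ_[p])‖ ≤ (p:ℝ)^(-1:ℤ) := by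
    have := (Padic.norm_int_le_pow_iff_dvd (p := p) (Nat.choose (m+k) m : ℤ) 1).mpr
      (by exact_mod_cast pow_one p ▸ Int.natCast_dvd_natCast.mpr hdvd)
    simpa using this
  push_cast at h1
  rw [norm_pow]
  exact pow_le_pow_left₀ (norm_nonneg _) h1 n

/-- congruence modulo `p` for
`∑_{k=0}^{p-1} C(m+k,m)^n ∑_{j=1}^k 1/j² ≡ −∑_{k=0}^{p-1} C(m+k,m)^n ∑_{j=1}^{k+m} 1/j²`. -/
theorem harmonic_square_reciprocal_congruence_mod_p (n p m : ℕ) [Fact p.Prime]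
    (hn : 3 ≤ n) (hp : 3 < p) (hpn : p ≡ 1 [MOD n]) (hm : p - 1 = m * n) :
    ‖((∑ k ∈ Finset.range p, (Nat.choose (m + k) m : ℚ) ^ n *
        ∑ j ∈ Finset.Icc 1 k, (1 : ℚ) / (j : ℚ) ^ 2 : ℚ) : ℚ_[p])‖ ≤ 1 ∧
    ‖((∑ k ∈ Finset.range p, (Nat.choose (m + k) m : ℚ) ^ n *
        ∑ j ∈ Finset.Icc 1 (k + m), (1 : ℚ) / (j : ℚ) ^ 2 : ℚ) : ℚ_[p])‖ ≤ 1 ∧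
    ‖((∑ k ∈ Finset.range p, (Nat.choose (m + k) m : ℚ) ^ n *
        ∑ j ∈ Finset.Icc 1 k, (1 : ℚ) / (j : ℚ) ^ 2 : ℚ) : ℚ_[p]) -
      (-((∑ k ∈ Finset.range p, (Nat.choose (m + k) m : ℚ) ^ n *
        ∑ j ∈ Finset.Icc 1 (k + m), (1 : ℚ) / (j : ℚ) ^ 2 : ℚ) : ℚ_[p]))‖ ≤ (p : ℝ) ^ (-1 : ℤ) := by
  have hppos : (0:ℝ) < (p:ℝ) := by positivity
  have hm1 : 1 ≤ m := by
    rcases Nat.eq_zero_or_pos m with h0 | h; · subst h0; simp at hm; omega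
    exact h
  have hmle : m ≤ p - 1 := by
    calc m = m * 1 := (Nat.mul_one m).symm
      _ ≤ m * n := Nat.mul_le_mul_left m (by omega)
      _ = p - 1 := hm.symm
  have hmp : m < p := by omega
  -- cast equalities
  have E1 : ((∑ k ∈ Finset.range p, (Nat.choose (m + k) m : ℚ) ^ n *
        ∑ j ∈ Finset.Icc 1 k, (1 : ℚ) / (j : ℚ) ^ 2 : ℚ) : ℚ_[p])
      = ∑ k ∈ Finset.range p, (Nat.choose (m+k) m : ℚ_[p])^n * Hs p k := by
    unfold Hs; push_cast; ring
  have E2 : ((∑ k ∈ Finset.range p, (Nat.choose (m + k) m : ℚ) ^ n *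
        ∑ j ∈ Finset.Icc 1 (k + m), (1 : ℚ) / (j : ℚ) ^ 2 : ℚ) : ℚ_[p])
      = ∑ k ∈ Finset.range p, (Nat.choose (m+k) m : ℚ_[p])^n * Hs p (k+m) := by
    unfold Hs; push_cast; ring
  have hnormc : ∀ k : ℕ, ‖(Nat.choose (m+k) m : ℚ_[p])^n‖ ≤ 1 := by
    intro k
    rw [norm_pow]
    exact pow_le_one₀ (norm_nonneg _) (norm_nat_le_one _)
  have hzarith : ((p:ℝ)^(-1:ℤ))^n * (p:ℝ)^(2:ℤ) = (p:ℝ)^((2:ℤ) - n) := by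
    rw [← zpow_natCast ((p:ℝ)^(-1:ℤ)) n, ← zpow_mul, ← zpow_add₀ (ne_of_gt hppos)]
    congr 1
    ring
  refine ⟨?_, ?_, ?_⟩
  · rw [E1]
    refine IsUltrametricDist.norm_sum_le_of_forall_le_of_nonneg zero_le_one (fun k hk => ?_)
    have hk' := Finset.mem_range.mp hk
    rw [norm_mul]
    exact mul_le_one₀ (hnormc k) (norm_nonneg _) (norm_Hs_le_one (by omega))
  · rw [E2]
    refine IsUltrametricDist.norm_sum_le_of_forall_le_of_nonneg zero_le_one (fun k hk => ?_)
    have hk' := Finset.mem_range.mp hk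
    rw [norm_mul]
    by_cases hcase : k + m ≤ p - 1
    · exact mul_le_one₀ (hnormc k) (norm_nonneg _) (norm_Hs_le_one hcase)
    · have hple : p ≤ m + k := by omega
      have h1 : ‖(Nat.choose (m+k) m : ℚ_[p])^n‖ ≤ ((p:ℝ)^(-1:ℤ))^n :=
        norm_choose_pow_le hn hmp hk' hple
      have h2 : ‖Hs p (k+m)‖ ≤ (p:ℝ)^(2:ℤ) := norm_Hs_le_sq (by omega)
      calc ‖(Nat.choose (m+k) m : ℚ_[p])^n‖ * ‖Hs p (k+m)‖
          ≤ ((p:ℝ)^(-1:ℤ))^n * (p:ℝ)^(2:ℤ) :=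
            mul_le_mul h1 h2 (norm_nonneg _) (by positivity)
        _ = (p:ℝ)^((2:ℤ) - n) := hzarith
        _ ≤ 1 := by
            rw [show (1:ℝ) = (p:ℝ)^(0:ℤ) by simp]
            refine zpow_le_zpow_right₀ (by exact_mod_cast (Fact.out : p.Prime).one_lt.le) (by omega)
  · rw [sub_neg_eq_add, E1, E2, ← Finset.sum_add_distrib]
    have Ef : ∀ k, (Nat.choose (m+k) m : ℚ_[p])^n * Hs p k
        + (Nat.choose (m+k) m : ℚ_[p])^n * Hs p (k+m)
        = (Nat.choose (m+k) m : ℚ_[p])^n * (Hs p k + Hs p (k+m)) := fun k => (mul_add _ _ _).symm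
    rw [Finset.sum_congr rfl (fun k _ => Ef k)]
    set f : ℕ → ℚ_[p] := fun k => (Nat.choose (m+k) m : ℚ_[p])^n * (Hs p k + Hs p (k+m)) with hf
    have hsplit : ∑ k ∈ Finset.range p, f k
        = (∑ k ∈ Finset.range (p-m), f k) + ∑ k ∈ Finset.Ico (p-m) p, f k := by
      rw [Finset.range_eq_Ico, Finset.range_eq_Ico]
      exact (Finset.sum_Ico_consecutive f (Nat.zero_le _) (by omega)).symm
    -- tail bound
    have htail : ‖∑ k ∈ Finset.Ico (p-m) p, f k‖ ≤ (p:ℝ)^(-1:ℤ) := by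
      refine IsUltrametricDist.norm_sum_le_of_forall_le_of_nonneg (le_of_lt pinv_pos)
        (fun k hk => ?_)
      have hk' := Finset.mem_Ico.mp hk
      rw [hf]
      simp only []
      rw [norm_mul]
      have h1 : ‖(Nat.choose (m+k) m : ℚ_[p])^n‖ ≤ ((p:ℝ)^(-1:ℤ))^n :=
        norm_choose_pow_le hn hmp hk'.2 (by omega)
      have h2 : ‖Hs p k + Hs p (k+m)‖ ≤ (p:ℝ)^(2:ℤ) := by
        refine (Padic.nonarchimedean _ _).trans (max_le ?_ ?_)
        · exact norm_Hs_le_sq (by omega)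
        · exact norm_Hs_le_sq (by omega)
      calc ‖(Nat.choose (m+k) m : ℚ_[p])^n‖ * ‖Hs p k + Hs p (k+m)‖
          ≤ ((p:ℝ)^(-1:ℤ))^n * (p:ℝ)^(2:ℤ) :=
            mul_le_mul h1 h2 (norm_nonneg _) (by positivity)
        _ = (p:ℝ)^((2:ℤ) - n) := hzarith
        _ ≤ (p:ℝ)^(-1:ℤ) :=
            zpow_le_zpow_right₀ (by exact_mod_cast (Fact.out : p.Prime).one_lt.le) (by omega)
    -- main part
    have hmain : ‖∑ k ∈ Finset.range (p-m), f k‖ ≤ (p:ℝ)^(-1:ℤ) := by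
      set T := ∑ k ∈ Finset.range (p-m), f k with hT
      have hrefl : ∑ k ∈ Finset.range (p-m), f (p-m-1-k) = T :=
        Finset.sum_range_reflect f (p-m)
      have hterm : ∀ k ∈ Finset.range (p-m), PC p (f (p-m-1-k)) (-(f k)) := by
        intro k hk
        have hk' := Finset.mem_range.mp hk
        have hkm : m + k ≤ p - 1 := by omega
        have hc : PC p ((Nat.choose (m+(p-m-1-k)) m : ℚ_[p])^n)
            ((Nat.choose (m+k) m : ℚ_[p])^n) := by
          rw [show m+(p-m-1-k) = p-1-k by omega]
          exact choose_pow_cong hp hkm hm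
        have h1 : PC p (Hs p (p-m-1-k)) (-(Hs p (m+k))) := by
          rw [show p-m-1-k = p-1-(m+k) by omega]
          exact h_reflect hp hkm
        have h2 : PC p (Hs p ((p-m-1-k)+m)) (-(Hs p k)) := by
          rw [show (p-m-1-k)+m = p-1-k by omega]
          exact h_reflect hp (by omega)
        have hh := PC.add h1 h2
        have hrw : -(Hs p (m+k)) + -(Hs p k) = -(Hs p k + Hs p (k+m)) := by
          rw [Nat.add_comm m k]; ring
        rw [hrw] at hh
        have hnegnorm : ‖-(Hs p k + Hs p (k+m))‖ ≤ 1 := by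
          rw [norm_neg]
          refine (Padic.nonarchimedean _ _).trans
            (max_le (norm_Hs_le_one (by omega)) (norm_Hs_le_one (by omega)))
        have := PC.mul hc hh (hnormc _) hnegnorm
        have hfin : (Nat.choose (m+k) m : ℚ_[p])^n * -(Hs p k + Hs p (k+m)) = -(f k) := by
          rw [hf]; ring
        rw [hfin] at this
        exact this
      have hcong : PC p T (-T) := by
        have := PC.sum hterm
        rw [hrefl, Finset.sum_neg_distrib] at this
        exact this
      unfold PC at hcong
      have h2T : T - -T = ((2:ℕ):ℚ_[p]) * T := by push_cast; ring
      rw [h2T, norm_mul, norm_nat_unit (p := p) (fun hd => by have := Nat.le_of_dvd (by norm_num) hd; omega), one_mul] at hcong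
      exact hcong
    rw [hsplit]
    exact (Padic.nonarchimedean _ _).trans (max_le hmain htail)
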